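/- Under the OCSC recursion over an error-free channel, the parameter sequence is uniformly bounded below: λ_t ≥ −η(1−D) for all t ≥ 1, for every sequence of source symbols, every sequence of predictive distributions, and every target outage level D ∈ [0,1]. (Key step in the proof of Theorem 1) -/
import Mathlib


/-- **Key step in the proof of Theorem 1 (OCSC parameter lower bound).**
Under the OCSC recursion over an error-free channel (threshold `s t = max 0 (lam t)`,
high-probability set `𝒳_t = {x | p t x ≥ s t}`, update
`lam (t+1) = lam t − η (𝟙{X t ∉ 𝒳_t} − D)`), the parameter sequence is uniformly
bounded below: `lam t ≥ −η (1 − D)` for all `t ≥ 1`, for every sequence of source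
symbols, every sequence of predictive distributions, and every `D ∈ [0,1]`. -/
theorem ocsc_lambda_lower_bound
    {𝒳 : Type*} [Fintype 𝒳] [Nonempty 𝒳]
    (X : ℕ → 𝒳) (p : ℕ → 𝒳 → ℝ)
    (hp0 : ∀ t x, 0 ≤ p t x) (hp1 : ∀ t, ∑ x, p t x = 1)
    (D : ℝ) (hD : 0 ≤ D ∧ D ≤ 1)
    (η : ℝ) (hη : 0 < η)
    (lam₀ : ℝ) (hlam₀ : 0 < lam₀)
    (lam s : ℕ → ℝ) (hinit : lam 1 = lam₀)
    (hs : ∀ t, s t = max 0 (lam t))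
    (hupd : ∀ t, 1 ≤ t →
      lam (t + 1) = lam t - η * ((if p t (X t) < s t then (1 : ℝ) else 0) - D)) :
    ∀ t, 1 ≤ t → -(η * (1 - D)) ≤ lam t := by
  have hηD : 0 ≤ η * (1 - D) := mul_nonneg hη.le (by linarith [hD.2])
  intro t ht
  induction t with
  | zero => omega
  | succ n ih =>
    rcases Nat.eq_or_lt_of_le ht with h1 | h1
    · rw [h1] at hinit
      rw [hinit]; linarith
    · have hn : 1 ≤ n := by omega
      have hrec := hupd n hn
      by_cases hneg : lam n < 0
      · -- threshold is 0, so no outage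
        have hs0 : s n = 0 := by rw [hs n]; exact max_eq_left hneg.le
        have : ¬ p n (X n) < s n := by rw [hs0]; exact not_lt.mpr (hp0 n (X n))
        rw [hrec, if_neg this]
        have := ih hn
        nlinarith [hD.1]
      · push_neg at hneg
        rw [hrec]
        have hind : (if p n (X n) < s n then (1:ℝ) else 0) ≤ 1 := by
          split <;> norm_num
        have hind0 : 0 ≤ (if p n (X n) < s n then (1:ℝ) else 0) := by
          split <;> norm_num
        nlinarith [hD.1, hD.2]
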